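/- Let F be a cubic form on a two-dimensional ℚ-vector space with components F_{ijk} in some basis. If F₁₁₁F₂₂₂ = F₁₁₂F₁₂₂, F₁₁₂² = F₁₁₁F₁₂₂ and F₁₂₂² = F₁₁₂F₂₂₂ hold in one basis, then these three relations hold in every basis. -/

import Mathlib

/-- If the components of a cubic form on a 2-dimensional ℚ-vector space satisfy
`F₁₁₁F₂₂₂ = F₁₁₂F₁₂₂`, `F₁₁₂² = F₁₁₁F₁₂₂` and `F₁₂₂² = F₁₁₂F₂₂₂` in one basis,
then they satisfy these relations in every basis. -/
theorem stmt_8 (V : Type*) [AddCommGroup V] [Module ℚ V]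
    (hV : Module.finrank ℚ V = 2)
    (F : V →ₗ[ℚ] V →ₗ[ℚ] V →ₗ[ℚ] ℚ)
    (hsymm₁ : ∀ x y z : V, F x y z = F y x z)
    (hsymm₂ : ∀ x y z : V, F x y z = F x z y)
    (e : Module.Basis (Fin 2) ℚ V)
    (h1 : F (e 0) (e 0) (e 0) * F (e 1) (e 1) (e 1)
        = F (e 0) (e 0) (e 1) * F (e 0) (e 1) (e 1))
    (h2 : F (e 0) (e 0) (e 1) ^ 2 = F (e 0) (e 0) (e 0) * F (e 0) (e 1) (e 1))
    (h3 : F (e 0) (e 1) (e 1) ^ 2 = F (e 0) (e 0) (e 1) * F (e 1) (e 1) (e 1))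
    (e' : Module.Basis (Fin 2) ℚ V) :
    F (e' 0) (e' 0) (e' 0) * F (e' 1) (e' 1) (e' 1)
        = F (e' 0) (e' 0) (e' 1) * F (e' 0) (e' 1) (e' 1) ∧
    F (e' 0) (e' 0) (e' 1) ^ 2 = F (e' 0) (e' 0) (e' 0) * F (e' 0) (e' 1) (e' 1) ∧
    F (e' 0) (e' 1) (e' 1) ^ 2 = F (e' 0) (e' 0) (e' 1) * F (e' 1) (e' 1) (e' 1) := by
  set A := F (e 0) (e 0) (e 0) with hA
  set B := F (e 0) (e 0) (e 1) with hB
  set C := F (e 0) (e 1) (e 1) with hC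
  set D := F (e 1) (e 1) (e 1) with hD
  have s100 : F (e 1) (e 0) (e 0) = B := by
    rw [hsymm₁ (e 1) (e 0) (e 0), hsymm₂ (e 0) (e 1) (e 0), hB]
  have s010 : F (e 0) (e 1) (e 0) = B := by rw [hsymm₂ (e 0) (e 1) (e 0), hB]
  have s101 : F (e 1) (e 0) (e 1) = C := by rw [hsymm₁ (e 1) (e 0) (e 1), hC]
  have s110 : F (e 1) (e 1) (e 0) = C := by
    rw [hsymm₂ (e 1) (e 1) (e 0), hsymm₁ (e 1) (e 0) (e 1), hC]
  have key : ∀ x y z : V, F x y z =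
      e.repr x 0 * e.repr y 0 * e.repr z 0 * A
      + (e.repr x 0 * e.repr y 0 * e.repr z 1 + e.repr x 0 * e.repr y 1 * e.repr z 0
          + e.repr x 1 * e.repr y 0 * e.repr z 0) * B
      + (e.repr x 0 * e.repr y 1 * e.repr z 1 + e.repr x 1 * e.repr y 0 * e.repr z 1
          + e.repr x 1 * e.repr y 1 * e.repr z 0) * C
      + e.repr x 1 * e.repr y 1 * e.repr z 1 * D := by
    intro x y z
    conv_lhs => rw [← e.sum_repr x, ← e.sum_repr y, ← e.sum_repr z]
    simp only [Fin.sum_univ_two, map_add, map_smul, LinearMap.add_apply,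
      LinearMap.smul_apply, smul_eq_mul]
    rw [s100, s010, s101, s110, ← hA, ← hB, ← hC, ← hD]
    ring
  set a := e.repr (e' 0) 0 with ha
  set b := e.repr (e' 0) 1 with hb
  set c := e.repr (e' 1) 0 with hc
  set d := e.repr (e' 1) 1 with hd
  rw [key (e' 0) (e' 0) (e' 0), key (e' 0) (e' 0) (e' 1), key (e' 0) (e' 1) (e' 1),
    key (e' 1) (e' 1) (e' 1), ← ha, ← hb, ← hc, ← hd]
  refine ⟨?_, ?_, ?_⟩
  · linear_combination (-2*a*b^2*c^3 + 4*a^2*b*c^2*d - 2*a^3*c*d^2) * h2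
      - (-b^3*c^3 + a*b^2*c^2*d + a^2*b*c*d^2 - a^3*d^3) * h1
      + (-2*b^3*c^2*d + 4*a*b^2*c*d^2 - 2*a^2*b*d^3) * h3
  · linear_combination (a^2*b^2*c^2 - 2*a^3*b*c*d + a^4*d^2) * h2
      - (a*b^3*c^2 - 2*a^2*b^2*c*d + a^3*b*d^2) * h1
      + (b^4*c^2 - 2*a*b^3*c*d + a^2*b^2*d^2) * h3
  · linear_combination (b^2*c^4 - 2*a*b*c^3*d + a^2*c^2*d^2) * h2
      - (b^2*c^3*d - 2*a*b*c^2*d^2 + a^2*c*d^3) * h1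
      + (b^2*c^2*d^2 - 2*a*b*c*d^3 + a^2*d^4) * h3
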